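/- Let M ∈ ℕ, let V : Fin M → (EuclideanSpace ℝ (Fin 3) → EuclideanSpace ℝ (Fin 3)) be a family of continuously differentiable vector fields, let z ∈ Fin M → ℝ, and define T : ℝ → EuclideanSpace ℝ (Fin 3) → EuclideanSpace ℝ (Fin 3) by T t x = x + t • ∑ i, z i • V i x. Fix x, write J(t) ∈ Matrix (Fin 3) (Fin 3) ℝ for the matrix of the spatial Fréchet derivative of T t at x (in the standard basis), C(t) = (det J(t))⁻¹ • J(t)ᵀ * J(t), and A(t) = det(J(t)) • J(t)⁻¹ * (J(t)⁻¹)ᵀ. Let P_i ∈ Matrix (Fin 3) (Fin 3) ℝ be the matrix of the Fréchet derivative of V i at x and B_i = trace(P_i) • 1 − P_i − P_iᵀ. Then J(0) = 1, C'(0) = − ∑ i, z i • B_i, and A'(0) = ∑ i, z i • B_i. -/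

import Mathlib

open Matrix

attribute [local instance] Matrix.normedAddCommGroup Matrix.normedSpace

/-- The matrix (in the standard orthonormal basis) of a continuous linear map between
3-dimensional Euclidean spaces. -/
noncomputable def stdMatrixOf
    (f : EuclideanSpace ℝ (Fin 3) →L[ℝ] EuclideanSpace ℝ (Fin 3)) :
    Matrix (Fin 3) (Fin 3) ℝ :=
  LinearMap.toMatrix (EuclideanSpace.basisFun (Fin 3) ℝ).toBasis
    (EuclideanSpace.basisFun (Fin 3) ℝ).toBasis f.toLinearMap

private lemma det_aux (Q : Matrix (Fin 3) (Fin 3) ℝ) (t : ℝ) :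
    (1 + t • Q).det = 1 + t * Q.trace
      + t^2 * (Q 0 0 * Q 1 1 + Q 0 0 * Q 2 2 + Q 1 1 * Q 2 2
          - Q 0 1 * Q 1 0 - Q 0 2 * Q 2 0 - Q 1 2 * Q 2 1)
      + t^3 * Q.det := by
  simp [det_fin_three, trace_fin_three, Matrix.add_apply, Matrix.smul_apply,
    Matrix.one_apply]
  ring

private lemma adj_aux (Q : Matrix (Fin 3) (Fin 3) ℝ) (t : ℝ) :
    (1 + t • Q).adjugate
      = 1 + t • (Q.trace • (1 : Matrix (Fin 3) (Fin 3) ℝ) - Q) + (t * t) • Q.adjugate := by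
  ext i j
  fin_cases i <;> fin_cases j <;>
    simp [adjugate_fin_three, trace_fin_three, Matrix.add_apply, Matrix.smul_apply,
      Matrix.one_apply, Matrix.sub_apply, smul_eq_mul] <;> ring

private lemma Ct_aux (Q : Matrix (Fin 3) (Fin 3) ℝ) (t d : ℝ) :
    d • ((1 + t • Q)ᵀ * (1 + t • Q))
      = d • (1 : Matrix (Fin 3) (Fin 3) ℝ) + (d * t) • (Q + Qᵀ) + (d * (t * t)) • (Qᵀ * Q) := by
  simp only [transpose_add, transpose_smul, transpose_one, add_mul, mul_add,
    Matrix.smul_mul, Matrix.mul_smul, one_mul, mul_one, smul_add, smul_smul]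
  module

private lemma At_aux (S G : Matrix (Fin 3) (Fin 3) ℝ) (t d : ℝ) :
    d • ((1 + t • S + (t * t) • G) * (1 + t • S + (t * t) • G)ᵀ)
      = d • (1 : Matrix (Fin 3) (Fin 3) ℝ) + (d * t) • (S + Sᵀ)
        + (d * (t * t)) • (S * Sᵀ + G + Gᵀ)
        + (d * (t * t * t)) • (S * Gᵀ + G * Sᵀ)
        + (d * (t * t * t * t)) • (G * Gᵀ) := by
  simp only [transpose_add, transpose_smul, transpose_one, add_mul, mul_add,
    Matrix.smul_mul, Matrix.mul_smul, one_mul, mul_one, smul_add, smul_smul]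
  module

private lemma poly_deriv (a b c : ℝ) :
    HasDerivAt (fun t : ℝ => 1 + t * a + t^2 * b + t^3 * c) a 0 := by
  have h1 : HasDerivAt (fun t : ℝ => t * a) a 0 := by
    simpa using (hasDerivAt_id (0:ℝ)).mul_const a
  have h2 : HasDerivAt (fun t : ℝ => t^2 * b) 0 0 := by
    simpa using (hasDerivAt_pow 2 (0:ℝ)).mul_const b
  have h3 : HasDerivAt (fun t : ℝ => t^3 * c) 0 0 := by
    simpa using (hasDerivAt_pow 3 (0:ℝ)).mul_const c
  exact (((h1.const_add 1).add h2).add h3).congr_deriv (by simp)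

/-- For a Karhunen–Loève type deformation `T t x = x + t • ∑ i, z i • V i x`,
the spatial Jacobian at `t = 0` is the identity and the deformation coefficients
`C(t) = (det J)⁻¹ • Jᵀ * J`, `A(t) = det J • J⁻¹ * (J⁻¹)ᵀ` satisfy
`C'(0) = -∑ i, z i • B i` and `A'(0) = ∑ i, z i • B i` with
`B i = tr(P i) • 1 - P i - (P i)ᵀ`. -/
theorem deriv_coefficients_KL_deformation
    (M : ℕ) (V : Fin M → EuclideanSpace ℝ (Fin 3) → EuclideanSpace ℝ (Fin 3))
    (hV : ∀ i, ContDiff ℝ 1 (V i)) (z : Fin M → ℝ)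
    (T : ℝ → EuclideanSpace ℝ (Fin 3) → EuclideanSpace ℝ (Fin 3))
    (hT : ∀ t x, T t x = x + t • ∑ i, z i • V i x)
    (x : EuclideanSpace ℝ (Fin 3))
    (J : ℝ → Matrix (Fin 3) (Fin 3) ℝ)
    (hJ : ∀ t, J t = stdMatrixOf (fderiv ℝ (T t) x))
    (C A : ℝ → Matrix (Fin 3) (Fin 3) ℝ)
    (hC : ∀ t, C t = ((J t).det)⁻¹ • ((J t)ᵀ * J t))
    (hA : ∀ t, A t = (J t).det • ((J t)⁻¹ * ((J t)⁻¹)ᵀ))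
    (P : Fin M → Matrix (Fin 3) (Fin 3) ℝ)
    (hP : ∀ i, P i = stdMatrixOf (fderiv ℝ (V i) x))
    (B : Fin M → Matrix (Fin 3) (Fin 3) ℝ)
    (hB : ∀ i, B i = Matrix.trace (P i) • (1 : Matrix (Fin 3) (Fin 3) ℝ) - P i - (P i)ᵀ) :
    J 0 = 1 ∧
    HasDerivAt C (-∑ i, z i • B i) 0 ∧
    HasDerivAt A (∑ i, z i • B i) 0 := by
  classical
  set Q : Matrix (Fin 3) (Fin 3) ℝ := ∑ i, z i • P i with hQ
  -- Step 1 : J t = 1 + t • Q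
  have hJQ : ∀ t, J t = 1 + t • Q := by
    intro t
    set F : EuclideanSpace ℝ (Fin 3) →L[ℝ] EuclideanSpace ℝ (Fin 3) :=
      ∑ i, z i • fderiv ℝ (V i) x with hF
    have hW : HasFDerivAt (fun y => ∑ i, z i • V i y) F x :=
      HasFDerivAt.fun_sum fun i _ =>
        (((hV i).differentiable one_ne_zero) x).hasFDerivAt.const_smul (z i)
    have hTt : T t = fun y => y + t • ∑ i, z i • V i y := funext (hT t)
    have hfd : HasFDerivAt (T t) (ContinuousLinearMap.id ℝ _ + t • F) x := by
      rw [hTt]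
      exact (hasFDerivAt_id x).add (hW.const_smul t)
    rw [hJ, hfd.fderiv]
    unfold stdMatrixOf
    simp only [ContinuousLinearMap.coe_add, ContinuousLinearMap.coe_smul, hF,
      ContinuousLinearMap.coe_sum, map_add, _root_.map_smul, map_sum]
    congr 1
    · exact LinearMap.toMatrix_id _
    · congr 1
      refine Finset.sum_congr rfl fun i _ => ?_
      rw [hP]
      rfl
  have hJ0 : J 0 = 1 := by simp [hJQ 0]
  -- scalar functions
  set tr : ℝ := Q.trace with htr
  set d : ℝ → ℝ := fun t => ((1 : Matrix (Fin 3) (Fin 3) ℝ) + t • Q).det with hd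
  have hd0 : d 0 = 1 := by simp [hd]
  have hddet : HasDerivAt d tr 0 := by
    have : d = fun t : ℝ => 1 + t * tr
        + t^2 * (Q 0 0 * Q 1 1 + Q 0 0 * Q 2 2 + Q 1 1 * Q 2 2
            - Q 0 1 * Q 1 0 - Q 0 2 * Q 2 0 - Q 1 2 * Q 2 1)
        + t^3 * Q.det := funext fun t => det_aux Q t
    rw [this]
    exact poly_deriv _ _ _
  set g : ℝ → ℝ := fun t => (d t)⁻¹ with hg
  have hg0 : g 0 = 1 := by simp [hg, hd0]
  have hginv : HasDerivAt g (-tr) 0 := by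
    exact (hddet.inv (by rw [hd0]; norm_num)).congr_deriv (by rw [hd0]; ring)
  have hid : HasDerivAt (fun t : ℝ => t) 1 0 := hasDerivAt_id 0
  have ht2 : HasDerivAt (fun t : ℝ => t * t) 0 0 := (hid.mul hid).congr_deriv (by simp)
  have ht3 : HasDerivAt (fun t : ℝ => t * t * t) 0 0 := (ht2.mul hid).congr_deriv (by simp)
  have ht4 : HasDerivAt (fun t : ℝ => t * t * t * t) 0 0 := (ht3.mul hid).congr_deriv (by simp)
  -- sum of B's
  have hBsum : ∑ i, z i • B i = tr • (1 : Matrix (Fin 3) (Fin 3) ℝ) - Q - Qᵀ := by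
    have h1 : ∑ i, z i • B i
        = ∑ i, ((z i * (P i).trace) • (1 : Matrix (Fin 3) (Fin 3) ℝ)
            - z i • P i - z i • (P i)ᵀ) := by
      refine Finset.sum_congr rfl fun i _ => ?_
      rw [hB]
      simp [smul_sub, smul_smul]
    rw [h1, Finset.sum_sub_distrib, Finset.sum_sub_distrib]
    congr 1
    · congr 1
      rw [← Finset.sum_smul, htr, hQ, trace_sum]
      congr 1
      exact Finset.sum_congr rfl fun i _ => by rw [trace_smul]; rfl
    · rw [hQ, transpose_sum]
      exact Finset.sum_congr rfl fun i _ => by rw [transpose_smul]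
  refine ⟨hJ0, ?_, ?_⟩
  -- C part
  · have hCexp : C = fun t => g t • (1 : Matrix (Fin 3) (Fin 3) ℝ)
        + (g t * t) • (Q + Qᵀ) + (g t * (t * t)) • (Qᵀ * Q) := by
      funext t
      rw [hC, hJQ]
      exact Ct_aux Q t (g t)
    rw [hCexp]
    have h1 : HasDerivAt (fun t => g t • (1 : Matrix (Fin 3) (Fin 3) ℝ))
        ((-tr) • (1 : Matrix (Fin 3) (Fin 3) ℝ)) 0 := hginv.smul_const _
    have h2 : HasDerivAt (fun t => (g t * t) • (Q + Qᵀ)) ((1:ℝ) • (Q + Qᵀ)) 0 := by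
      exact ((hginv.mul hid).smul_const (Q + Qᵀ)).congr_deriv (by simp [hg0])
    have h3 : HasDerivAt (fun t => (g t * (t * t)) • (Qᵀ * Q))
        ((0:ℝ) • (Qᵀ * Q)) 0 := by
      exact ((hginv.mul ht2).smul_const (Qᵀ * Q)).congr_deriv (by simp [hg0])
    have := (h1.add h2).add h3
    refine this.congr_deriv ?_
    rw [hBsum]
    simp
    abel
  -- A part
  · set S : Matrix (Fin 3) (Fin 3) ℝ := tr • (1 : Matrix (Fin 3) (Fin 3) ℝ) - Q with hS
    set G : Matrix (Fin 3) (Fin 3) ℝ := Q.adjugate with hG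
    set k : ℝ → ℝ := fun t => d t * g t * g t with hk
    have hk0 : k 0 = 1 := by simp [hk, hd0, hg0]
    have hkd : HasDerivAt k (-tr) 0 := by
      exact ((hddet.mul hginv).mul hginv).congr_deriv (by simp only [Pi.mul_apply, hd0, hg0]; ring)
    have hAexp : A = fun t => k t • (1 : Matrix (Fin 3) (Fin 3) ℝ) + (k t * t) • (S + Sᵀ)
        + (k t * (t * t)) • (S * Sᵀ + G + Gᵀ)
        + (k t * (t * t * t)) • (S * Gᵀ + G * Sᵀ)
        + (k t * (t * t * t * t)) • (G * Gᵀ) := by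
      funext t
      rw [hA, hJQ, Matrix.inv_def, Ring.inverse_eq_inv, adj_aux]
      rw [← At_aux S G t (k t)]
      rw [transpose_smul, Matrix.smul_mul, Matrix.mul_smul, smul_smul, smul_smul]
    rw [hAexp]
    have h1 : HasDerivAt (fun t => k t • (1 : Matrix (Fin 3) (Fin 3) ℝ))
        ((-tr) • (1 : Matrix (Fin 3) (Fin 3) ℝ)) 0 := hkd.smul_const _
    have h2 : HasDerivAt (fun t => (k t * t) • (S + Sᵀ)) ((1:ℝ) • (S + Sᵀ)) 0 := by
      exact ((hkd.mul hid).smul_const (S + Sᵀ)).congr_deriv (by simp [hk0])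
    have h3 : HasDerivAt (fun t => (k t * (t * t)) • (S * Sᵀ + G + Gᵀ))
        ((0:ℝ) • (S * Sᵀ + G + Gᵀ)) 0 := by
      exact ((hkd.mul ht2).smul_const (S * Sᵀ + G + Gᵀ)).congr_deriv (by simp [hk0])
    have h4 : HasDerivAt (fun t => (k t * (t * t * t)) • (S * Gᵀ + G * Sᵀ))
        ((0:ℝ) • (S * Gᵀ + G * Sᵀ)) 0 := by
      exact ((hkd.mul ht3).smul_const (S * Gᵀ + G * Sᵀ)).congr_deriv (by simp [hk0])
    have h5 : HasDerivAt (fun t => (k t * (t * t * t * t)) • (G * Gᵀ))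
        ((0:ℝ) • (G * Gᵀ)) 0 := by
      exact ((hkd.mul ht4).smul_const (G * Gᵀ)).congr_deriv (by simp [hk0])
    have := (((h1.add h2).add h3).add h4).add h5
    refine this.congr_deriv ?_
    rw [hBsum]
    simp [hS, transpose_sub, transpose_smul, transpose_one, smul_sub]
    abel
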